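/- arXiv:1810.05991 — 4 statements merged into one kernel-verified Lean document; each statement's English description precedes it below -/
import Mathlib

section
/- With notation as in the induced representation: if b : Γ → ℓᵖ(Γ) is a 1-cocycle for the right regular representation ρ_Γ, Γ is generated by a finite set S, and the OE-cocycle β : Λ × Y → Γ is Lᵖ-integrable (∫_Y |β(λ,y)|^p dν < ∞ for each λ), then B(λ)(y) := b(β(λ⁻¹,y)⁻¹) defines an element B(λ) ∈ Lᵖ(Y, ℓᵖ(Γ)) for each λ ∈ Λ, with ∫_Y ‖B(λ)(y)‖^p dν(y) ≤ (max_{s∈S} ‖b(s)‖^p) ∫_Y |β(λ⁻¹,y)|^p dν(y). -/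
open MeasureTheory
open scoped ENNReal

/-- Word length with respect to a generating set `S`. -/
noncomputable def wordLength {Γ : Type*} [Group Γ] (S : Set Γ) (g : Γ) : ℕ :=
  sInf {n | ∃ w : List Γ, w.length = n ∧ (∀ x ∈ w, x ∈ S ∨ x⁻¹ ∈ S) ∧ w.prod = g}

/-- If `b : Γ → ℓᵖ(Γ)` is a `1`-cocycle for the right regular representation and the
OE-cocycle `β` is `Lᵖ`-integrable, then `B(λ)(y) := b(β(λ⁻¹,y)⁻¹)` defines an element
of `Lᵖ(Y, ℓᵖ(Γ))`, with
`∫ ‖B(λ)(y)‖^p dν ≤ (max_{s∈S} ‖b(s)‖^p) ∫ |β(λ⁻¹,y)|^p dν`. -/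
theorem induced_cocycle_memLp {Γ Λ Y : Type*} [Group Γ] [Group Λ]
    [MeasurableSpace Y] [MeasurableSpace Γ] [MeasurableSingletonClass Γ] [Countable Γ]
    (ν : Measure Y) [IsProbabilityMeasure ν]
    (p : ℝ≥0∞) [Fact (1 ≤ p)] (hp : p ≠ ⊤)
    (S : Finset Γ) (hS : S.Nonempty) (hgen : Subgroup.closure (S : Set Γ) = ⊤)
    (ρ : Γ →* (lp (fun _ : Γ => ℝ) p ≃ₗᵢ[ℝ] lp (fun _ : Γ => ℝ) p))
    (hρ : ∀ (g : Γ) (ξ : lp (fun _ : Γ => ℝ) p) (γ : Γ), (ρ g ξ : ∀ _ : Γ, ℝ) γ = ξ (γ * g))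
    (b : Γ → lp (fun _ : Γ => ℝ) p)
    (hb : ∀ g h : Γ, b (g * h) = b g + ρ g (b h))
    (β : Λ → Y → Γ) (hβmeas : ∀ l : Λ, Measurable (β l))
    (hβint : ∀ l : Λ,
      Integrable (fun y => (wordLength (S : Set Γ) (β l y) : ℝ) ^ p.toReal) ν) :
    ∀ l : Λ, MemLp (fun y => b ((β l⁻¹ y)⁻¹)) p ν ∧
      ∫ y, ‖b ((β l⁻¹ y)⁻¹)‖ ^ p.toReal ∂ν ≤
        (S.sup' hS fun s => ‖b s‖ ^ p.toReal) *
          ∫ y, (wordLength (S : Set Γ) (β l⁻¹ y) : ℝ) ^ p.toReal ∂ν := by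
  have hp1 : (1 : ℝ≥0∞) ≤ p := Fact.out
  have hp0 : p ≠ 0 := by
    intro h; rw [h] at hp1; exact absurd hp1 (by simp)
  set t := p.toReal with ht_def
  have ht0 : 0 < t := ENNReal.toReal_pos hp0 hp
  -- basic cocycle identities
  have hb1 : b 1 = 0 := by
    have h := hb 1 1
    simp only [one_mul, map_one] at h
    have h2 : b 1 = b 1 + b 1 := by simpa using h
    have := left_eq_add.mp h2
    simpa using this
  have hbinv : ∀ g : Γ, ‖b g⁻¹‖ = ‖b g‖ := by
    intro g
    have h := hb g g⁻¹
    rw [mul_inv_cancel, hb1] at h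
    have h2 : ρ g (b g⁻¹) = -b g := eq_neg_of_add_eq_zero_right h.symm
    calc ‖b g⁻¹‖ = ‖ρ g (b g⁻¹)‖ := ((ρ g).norm_map _).symm
    _ = ‖-b g‖ := by rw [h2]
    _ = ‖b g‖ := norm_neg _
  set M : ℝ := S.sup' hS fun s => ‖b s‖ with hM_def
  obtain ⟨s₀, hs₀S, hs₀⟩ := Finset.exists_mem_eq_sup' hS fun s => ‖b s‖
  have hM0 : 0 ≤ M := le_trans (norm_nonneg (b s₀)) (Finset.le_sup' (fun s => ‖b s‖) hs₀S)
  -- generator bound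
  have hgenbd : ∀ x : Γ, (x ∈ S ∨ x⁻¹ ∈ S) → ‖b x‖ ≤ M := by
    rintro x (hx | hx)
    · exact Finset.le_sup' (fun s => ‖b s‖) hx
    · rw [← hbinv x]; exact Finset.le_sup' (fun s => ‖b s‖) hx
  -- word bound
  have hword : ∀ w : List Γ, (∀ x ∈ w, x ∈ S ∨ x⁻¹ ∈ S) →
      ‖b w.prod‖ ≤ (w.length : ℝ) * M := by
    intro w
    induction w with
    | nil => intro _; simp [hb1]
    | cons x w ih =>
      intro hw
      have hx := hw x (List.mem_cons_self)
      have hw' := fun y hy => hw y (List.mem_cons_of_mem _ hy)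
      calc ‖b (x :: w).prod‖ = ‖b (x * w.prod)‖ := by rw [List.prod_cons]
      _ = ‖b x + ρ x (b w.prod)‖ := by rw [hb]
      _ ≤ ‖b x‖ + ‖ρ x (b w.prod)‖ := norm_add_le _ _
      _ = ‖b x‖ + ‖b w.prod‖ := by rw [(ρ x).norm_map]
      _ ≤ M + (w.length : ℝ) * M := add_le_add (hgenbd x hx) (ih hw')
      _ = ((x :: w).length : ℝ) * M := by
          simp [List.length_cons]; ring
  -- existence of words
  have hexists : ∀ g : Γ, ∃ w : List Γ,
      (∀ x ∈ w, x ∈ S ∨ x⁻¹ ∈ S) ∧ w.prod = g := by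
    intro g
    have hg : g ∈ Subgroup.closure (S : Set Γ) := hgen ▸ Subgroup.mem_top g
    induction hg using Subgroup.closure_induction with
    | mem x hx => exact ⟨[x], by simpa using Or.inl hx, by simp⟩
    | one => exact ⟨[], by simp, by simp⟩
    | mul x y _ _ ihx ihy =>
      obtain ⟨w1, hw1, hp1⟩ := ihx
      obtain ⟨w2, hw2, hp2⟩ := ihy
      refine ⟨w1 ++ w2, ?_, by simp [hp1, hp2]⟩
      intro z hz
      rcases List.mem_append.mp hz with h | h
      · exact hw1 z h
      · exact hw2 z h
    | inv x _ ihx =>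
      obtain ⟨w, hw, hpr⟩ := ihx
      refine ⟨(w.map (·⁻¹)).reverse, ?_, ?_⟩
      · intro z hz
        simp only [List.mem_reverse, List.mem_map] at hz
        obtain ⟨u, hu, rfl⟩ := hz
        rcases hw u hu with h | h
        · exact Or.inr (by simpa using h)
        · exact Or.inl h
      · rw [List.prod_reverse_noncomm]
        simp [hpr]
  -- key estimate
  have hkey : ∀ g : Γ, ‖b g‖ ≤ (wordLength (S : Set Γ) g : ℝ) * M := by
    intro g
    have hne : {n | ∃ w : List Γ, w.length = n ∧ (∀ x ∈ w, x ∈ S ∨ x⁻¹ ∈ S) ∧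
        w.prod = g}.Nonempty := by
      obtain ⟨w, hw, hpr⟩ := hexists g
      exact ⟨w.length, w, rfl, by simpa using hw, hpr⟩
    obtain ⟨w, hlen, hw, hpr⟩ := Nat.sInf_mem hne
    calc ‖b g‖ = ‖b w.prod‖ := by rw [hpr]
    _ ≤ (w.length : ℝ) * M := hword w (by simpa using hw)
    _ = (wordLength (S : Set Γ) g : ℝ) * M := by rw [hlen]; rfl
  set Mt : ℝ := S.sup' hS fun s => ‖b s‖ ^ t with hMt_def
  have hMt_ge : M ^ t ≤ Mt := by
    rw [hMt_def, hM_def, hs₀]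
    exact Finset.le_sup' (fun s => ‖b s‖ ^ t) hs₀S
  have hMt0 : 0 ≤ Mt := le_trans (Real.rpow_nonneg hM0 t) hMt_ge
  -- pointwise rpow estimate
  have hpt : ∀ g : Γ, ‖b g⁻¹‖ ^ t ≤ Mt * (wordLength (S : Set Γ) g : ℝ) ^ t := by
    intro g
    have h1 : ‖b g⁻¹‖ ≤ (wordLength (S : Set Γ) g : ℝ) * M := (hbinv g).le.trans (hkey g)
    calc ‖b g⁻¹‖ ^ t ≤ ((wordLength (S : Set Γ) g : ℝ) * M) ^ t :=
          Real.rpow_le_rpow (norm_nonneg _) h1 ht0.le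
    _ = (wordLength (S : Set Γ) g : ℝ) ^ t * M ^ t :=
          Real.mul_rpow (Nat.cast_nonneg _) hM0
    _ ≤ (wordLength (S : Set Γ) g : ℝ) ^ t * Mt := by
          exact mul_le_mul_of_nonneg_left hMt_ge (Real.rpow_nonneg (Nat.cast_nonneg _) t)
    _ = Mt * (wordLength (S : Set Γ) g : ℝ) ^ t := mul_comm _ _
  intro l
  set f : Y → lp (fun _ : Γ => ℝ) p := fun y => b ((β l⁻¹ y)⁻¹) with hf_def
  -- measurability
  have hf_sm : AEStronglyMeasurable f ν := by
    borelize (↥(lp (fun _ : Γ => ℝ) p))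
    refine ((stronglyMeasurable_iff_measurable_separable).2 ⟨?_, ?_⟩).aestronglyMeasurable
    · exact (measurable_of_countable fun g : Γ => b g⁻¹).comp (hβmeas l⁻¹)
    · refine ((Set.countable_range fun g : Γ => b g⁻¹).isSeparable).mono ?_
      rintro _ ⟨y, rfl⟩
      exact ⟨β l⁻¹ y, rfl⟩
  set h : Y → ℝ := fun y => (wordLength (S : Set Γ) (β l⁻¹ y) : ℝ) with hh_def
  have hh_sm : AEStronglyMeasurable h ν :=
    ((measurable_of_countable fun g : Γ => (wordLength (S : Set Γ) g : ℝ)).comp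
      (hβmeas l⁻¹)).aestronglyMeasurable
  have hh_mem : MemLp h p ν := by
    have := (memLp_norm_rpow_iff (p := p) (q := p) hh_sm hp0 hp).1
    apply this
    rw [ENNReal.div_self hp0 hp, memLp_one_iff_integrable]
    have : (fun y => ‖h y‖ ^ p.toReal) =
        fun y => (wordLength (S : Set Γ) (β l⁻¹ y) : ℝ) ^ p.toReal := by
      funext y
      rw [Real.norm_of_nonneg (Nat.cast_nonneg _)]
    rw [this]
    exact hβint l⁻¹
  have hf_mem : MemLp f p ν := by
    refine MemLp.of_le (hh_mem.const_mul M) hf_sm (Filter.Eventually.of_forall fun y => ?_)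
    have h1 : ‖f y‖ ≤ h y * M := (hbinv _).le.trans (hkey _)
    calc ‖f y‖ ≤ h y * M := h1
    _ = M * h y := mul_comm _ _
    _ ≤ ‖M * h y‖ := le_abs_self _
  refine ⟨hf_mem, ?_⟩
  have hint_f : Integrable (fun y => ‖f y‖ ^ t) ν := hf_mem.integrable_norm_rpow hp0 hp
  have hint_g : Integrable (fun y => Mt * (wordLength (S : Set Γ) (β l⁻¹ y) : ℝ) ^ t) ν :=
    (hβint l⁻¹).const_mul Mt
  calc ∫ y, ‖b ((β l⁻¹ y)⁻¹)‖ ^ t ∂ν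
      ≤ ∫ y, Mt * (wordLength (S : Set Γ) (β l⁻¹ y) : ℝ) ^ t ∂ν :=
        integral_mono hint_f hint_g fun y => hpt (β l⁻¹ y)
  _ = Mt * ∫ y, (wordLength (S : Set Γ) (β l⁻¹ y) : ℝ) ^ t ∂ν := integral_const_mul _ _
end

section
/- With notation as above, the map B : Λ → Lᵖ(Y, ℓᵖ(Γ)) defined by B(λ)(y) = b(β(λ⁻¹,y)⁻¹) is a 1-cocycle for the induced representation σ: B(λ₁λ₂) = B(λ₁) + σ(λ₁) B(λ₂) for all λ₁, λ₂ ∈ Λ. -/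
open MeasureTheory
open scoped ENNReal

/-- The map `B(λ)(y) = b(β(λ⁻¹,y)⁻¹)` is a `1`-cocycle for the induced representation
`σ`, i.e. `B(λ₁λ₂)(y) = B(λ₁)(y) + (σ(λ₁)B(λ₂))(y)` a.e., where
`(σ(λ)φ)(y) = ρ(β(λ⁻¹,y)⁻¹) φ(λ⁻¹·y)`. -/
theorem induced_cocycle_identity {Γ Λ Y : Type*} [Group Γ] [Group Λ] [MulAction Λ Y]
    [MeasurableSpace Y] (ν : Measure Y) [IsProbabilityMeasure ν]
    (hact : ∀ l : Λ, MeasurePreserving (fun y : Y => l • y) ν ν)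
    (p : ℝ≥0∞) [Fact (1 ≤ p)]
    (ρ : Γ →* (lp (fun _ : Γ => ℝ) p ≃ₗᵢ[ℝ] lp (fun _ : Γ => ℝ) p))
    (hρ : ∀ (g : Γ) (ξ : lp (fun _ : Γ => ℝ) p) (γ : Γ), (ρ g ξ : ∀ _ : Γ, ℝ) γ = ξ (γ * g))
    (b : Γ → lp (fun _ : Γ => ℝ) p)
    (hb : ∀ g h : Γ, b (g * h) = b g + ρ g (b h))
    (β : Λ → Y → Γ)
    (hcoc : ∀ l₁ l₂ : Λ, ∀ᵐ y ∂ν, β (l₁ * l₂) y = β l₁ (l₂ • y) * β l₂ y) :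
    ∀ l₁ l₂ : Λ, ∀ᵐ y ∂ν,
      b ((β (l₁ * l₂)⁻¹ y)⁻¹) =
        b ((β l₁⁻¹ y)⁻¹) + ρ ((β l₁⁻¹ y)⁻¹) (b ((β l₂⁻¹ (l₁⁻¹ • y))⁻¹)) := by
  intro l₁ l₂
  filter_upwards [hcoc l₂⁻¹ l₁⁻¹] with y hy
  have h : β (l₁ * l₂)⁻¹ y = β l₂⁻¹ (l₁⁻¹ • y) * β l₁⁻¹ y := by
    rw [mul_inv_rev]; exact hy
  rw [h, mul_inv_rev, hb]
end

section
/- Let f : X → Y be the orbit-equivalence isomorphism with cocycle β : Λ × Y → Γ satisfying the cocycle identity. Then the map φ ↦ φ̃ from Lᵖ(Y, ℓᵖ(Γ)) to Lᵖ(X, ℓᵖ(Λ)) defined by (φ̃(x))(λ) = (φ(λ⁻¹·f(x)))(β(λ⁻¹, f(x))⁻¹) is a linear isometric isomorphism of Banach spaces. -/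
set_option linter.unusedSectionVars false

open MeasureTheory Filter
open scoped ENNReal Topology

namespace OETransfer

variable {Γ Λ X Y : Type*} [Group Γ] [Group Λ]
    [MulAction Γ X] [MulAction Λ Y]
    [MeasurableSpace X] [MeasurableSpace Y]
    [MeasurableSpace Γ] [MeasurableSingletonClass Γ] [Countable Γ] [Countable Λ]
    {μ : Measure X} {ν : Measure Y}

section lpfacts

variable {p : ℝ≥0∞} {ι : Type*}

lemma enorm_rpow_eq {E : Type*} [NormedAddCommGroup E] (v : E) {q : ℝ} (hq : 0 ≤ q) :
    ((‖v‖₊ : ℝ≥0∞)) ^ q = ENNReal.ofReal (‖v‖ ^ q) := by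
  rw [← enorm_eq_nnnorm, ← ofReal_norm, ← ENNReal.ofReal_rpow_of_nonneg (norm_nonneg v) hq]

lemma enorm_lp_rpow [Fact (1 ≤ p)] (hq : 0 < p.toReal) (v : lp (fun _ : ι => ℝ) p) :
    ((‖v‖₊ : ℝ≥0∞)) ^ p.toReal = ∑' i, ((‖v i‖₊ : ℝ≥0∞)) ^ p.toReal := by
  rw [enorm_rpow_eq _ hq.le, lp.norm_rpow_eq_tsum hq v,
    ENNReal.ofReal_tsum_of_nonneg (fun i => by positivity) ((lp.memℓp v).summable hq)]
  exact tsum_congr fun i => (enorm_rpow_eq _ hq.le).symm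

lemma memℓp_of_tsum_ne_top (hq : 0 < p.toReal) (g : ι → ℝ)
    (h : (∑' i, ((‖g i‖₊ : ℝ≥0∞)) ^ p.toReal) ≠ ∞) : Memℓp g p := by
  apply memℓp_gen
  have h' : (∑' i, ((‖g i‖ ^ p.toReal).toNNReal : ℝ≥0∞)) ≠ ∞ := by
    refine ne_of_eq_of_ne (tsum_congr fun i => ?_) h
    rw [show (((‖g i‖ ^ p.toReal).toNNReal : ℝ≥0∞)) = ENNReal.ofReal (‖g i‖ ^ p.toReal) from rfl,
      ← enorm_rpow_eq (E := ℝ) _ hq.le]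
  have hs : Summable fun i => (‖g i‖ ^ p.toReal).toNNReal :=
    ENNReal.tsum_coe_ne_top_iff_summable.mp h'
  have hs2 : Summable fun i => ((‖g i‖ ^ p.toReal).toNNReal : ℝ) := NNReal.summable_coe.mpr hs
  refine hs2.congr fun i => ?_
  rw [Real.coe_toNNReal _ (by positivity)]

lemma lip_eval [Fact (1 ≤ p)] (i : ι) :
    LipschitzWith 1 (fun v : lp (fun _ : ι => ℝ) p => v i) := by
  have hp0 : p ≠ 0 := (lt_of_lt_of_le zero_lt_one (Fact.out : (1:ℝ≥0∞) ≤ p)).ne'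
  apply LipschitzWith.of_dist_le_mul
  intro v w
  rw [NNReal.coe_one, one_mul, dist_eq_norm, dist_eq_norm]
  have := lp.norm_apply_le_norm hp0 (v - w) i
  simpa [lp.coeFn_sub] using this

lemma single_sub' [Fact (1 ≤ p)] [DecidableEq ι] (l : ι) (a b : ℝ) :
    (lp.single p l a : lp (fun _ : ι => ℝ) p) - lp.single p l b = lp.single p l (a - b) := by
  refine lp.ext (funext fun j => ?_)
  by_cases hj : j = l
  · subst hj
    simp [lp.single_apply_self, lp.coeFn_sub]
  · simp [lp.single_apply_ne p l _ hj, lp.coeFn_sub]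

lemma lip_single [Fact (1 ≤ p)] [DecidableEq ι] (hq : 0 < p.toReal) (l : ι) :
    LipschitzWith 1 (fun c : ℝ => (lp.single p l c : lp (fun _ : ι => ℝ) p)) := by
  apply LipschitzWith.of_dist_le_mul
  intro a b
  rw [NNReal.coe_one, one_mul, dist_eq_norm, dist_eq_norm, single_sub' l a b]
  rw [show ‖(lp.single p l (a - b) : lp (fun _ : ι => ℝ) p)‖ = ‖a - b‖ from
    lp.norm_single (E := fun _ : ι => ℝ) (zero_lt_one.trans_le Fact.out) l (a - b)]

end lpfacts

section core

variable {p : ℝ≥0∞}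

/-- The transferred coordinates. -/
noncomputable def coords (β : Λ → Y → Γ) (f : X → Y)
    (φ : Y → lp (fun _ : Γ => ℝ) p) (x : X) (l : Λ) : ℝ :=
  φ (l⁻¹ • f x) ((β l⁻¹ (f x))⁻¹)

open Classical in
/-- The transfer map on functions. -/
noncomputable def tmap (p : ℝ≥0∞) (β : Λ → Y → Γ) (f : X → Y)
    (φ : Y → lp (fun _ : Γ => ℝ) p) (x : X) : lp (fun _ : Λ => ℝ) p :=
  if h : Memℓp (coords β f φ x) p then ⟨coords β f φ x, h⟩ else 0

lemma coords_def (β : Λ → Y → Γ) (f : X → Y) (φ : Y → lp (fun _ : Γ => ℝ) p) (x : X) (l : Λ) :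
    coords β f φ x l = φ (l⁻¹ • f x) ((β l⁻¹ (f x))⁻¹) := rfl

lemma tmap_of_memℓp {β : Λ → Y → Γ} {f : X → Y} {φ : Y → lp (fun _ : Γ => ℝ) p} {x : X}
    (h : Memℓp (coords β f φ x) p) :
    tmap p β f φ x = (⟨coords β f φ x, h⟩ : lp (fun _ : Λ => ℝ) p) := by
  rw [tmap, dif_pos h]

lemma measurable_coords
    (hactΛ : ∀ l : Λ, MeasurePreserving (fun y : Y => l • y) ν ν)
    (f : X ≃ᵐ Y) (β : Λ → Y → Γ) (hβmeas : ∀ l, Measurable (β l))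
    {φ : Y → lp (fun _ : Γ => ℝ) p} (hsm : ∀ γ : Γ, Measurable fun y => φ y γ) (l : Λ) :
    Measurable fun x => coords β f φ x l := by
  have h1 : Measurable fun q : Y × Γ => φ q.1 q.2 :=
    measurable_from_prod_countable_left fun γ => hsm γ
  have h2 : Measurable fun x : X => ((l⁻¹ • f x : Y), ((β l⁻¹ (f x))⁻¹ : Γ)) :=
    ((hactΛ l⁻¹).measurable.comp f.measurable).prodMk
      ((measurable_of_countable _).comp ((hβmeas l⁻¹).comp f.measurable))
  exact h1.comp h2

/-- The key change-of-variables identity. -/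
lemma keyB
    (hactΛ : ∀ l : Λ, MeasurePreserving (fun y : Y => l • y) ν ν)
    (f : X ≃ᵐ Y) (hf : MeasurePreserving f μ ν)
    (β : Λ → Y → Γ) (hβmeas : ∀ l, Measurable (β l))
    (hinv : ∀ l : Λ, ∀ᵐ y ∂ν, β l⁻¹ (l • y) = (β l y)⁻¹)
    (hbij : ∀ᵐ y ∂ν, Function.Bijective fun l : Λ => β l y)
    (h : Y → Γ → ℝ≥0∞) (hh : ∀ γ, Measurable fun y => h y γ) :
    ∫⁻ x, ∑' l : Λ, h (l⁻¹ • f x) ((β l⁻¹ (f x))⁻¹) ∂μ = ∫⁻ y, ∑' γ : Γ, h y γ ∂ν := by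
  have hH : Measurable fun q : Y × Γ => h q.1 q.2 := measurable_from_prod_countable_left hh
  have m1 : ∀ l : Λ, Measurable fun y : Y => h (l⁻¹ • y) ((β l⁻¹ y)⁻¹) := fun l =>
    hH.comp ((hactΛ l⁻¹).measurable.prodMk
      ((measurable_of_countable _).comp (hβmeas l⁻¹)))
  have m2 : ∀ l : Λ, Measurable fun x : X => h (l⁻¹ • f x) ((β l⁻¹ (f x))⁻¹) :=
    fun l => (m1 l).comp f.measurable
  rw [lintegral_tsum fun l => (m2 l).aemeasurable]
  have step : ∀ l : Λ, ∫⁻ x, h (l⁻¹ • f x) ((β l⁻¹ (f x))⁻¹) ∂μ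
      = ∫⁻ y, h y (β l y) ∂ν := by
    intro l
    rw [hf.lintegral_comp (m1 l), ← (hactΛ l).lintegral_comp (m1 l)]
    refine lintegral_congr_ae ?_
    filter_upwards [hinv l] with y hy
    simp only [hy, inv_smul_smul, inv_inv]
  have m3 : ∀ l : Λ, Measurable fun y : Y => h y (β l y) :=
    fun l => hH.comp (measurable_id.prodMk (hβmeas l))
  rw [tsum_congr step, ← lintegral_tsum fun l => (m3 l).aemeasurable]
  refine lintegral_congr_ae ?_
  filter_upwards [hbij] with y hy
  exact Equiv.tsum_eq (Equiv.ofBijective _ hy) (h y)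

lemma ae_comp {α B : Type*} [MeasurableSpace α] [MeasurableSpace B]
    {m : Measure α} {n : Measure B} {g : B → α}
    (hg : MeasurePreserving g n m) {P : α → Prop} (h : ∀ᵐ x ∂m, P x) :
    ∀ᵐ b ∂n, P (g b) :=
  hg.quasiMeasurePreserving.ae h

/-- Main analytic lemma: the transfer of a strongly measurable `Memℒp` function is
`Memℒp` with the same `eLpNorm`, and the coordinates are a.e. `Memℓp`. -/
lemma crux [Fact (1 ≤ p)] (hp : p ≠ ⊤)
    (hactΛ : ∀ l : Λ, MeasurePreserving (fun y : Y => l • y) ν ν)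
    (f : X ≃ᵐ Y) (hf : MeasurePreserving f μ ν)
    (β : Λ → Y → Γ) (hβmeas : ∀ l, Measurable (β l))
    (hinv : ∀ l : Λ, ∀ᵐ y ∂ν, β l⁻¹ (l • y) = (β l y)⁻¹)
    (hbij : ∀ᵐ y ∂ν, Function.Bijective fun l : Λ => β l y)
    {φ : Y → lp (fun _ : Γ => ℝ) p}
    (hsm : ∀ γ : Γ, Measurable fun y => φ y γ) (hφ : MemLp φ p ν) :
    (∀ᵐ x ∂μ, Memℓp (coords β f φ x) p) ∧
      MemLp (tmap p β f φ) p μ ∧ eLpNorm (tmap p β f φ) p μ = eLpNorm φ p ν := by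
  classical
  have hp1 : (1 : ℝ≥0∞) ≤ p := Fact.out
  have hp0 : p ≠ 0 := (lt_of_lt_of_le zero_lt_one hp1).ne'
  have hq : 0 < p.toReal := ENNReal.toReal_pos hp0 hp
  set q := p.toReal with hqdef
  -- the key integral identity
  have hkey : ∫⁻ x, ∑' l : Λ, ((‖coords β f φ x l‖₊ : ℝ≥0∞)) ^ q ∂μ
      = ∫⁻ y, ∑' γ : Γ, ((‖φ y γ‖₊ : ℝ≥0∞)) ^ q ∂ν :=
    keyB hactΛ f hf β hβmeas hinv hbij (fun y γ => ((‖φ y γ‖₊ : ℝ≥0∞)) ^ q)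
      (fun γ => ((hsm γ).nnnorm.coe_nnreal_ennreal).pow_const q)
  have hR : ∫⁻ y, ∑' γ : Γ, ((‖φ y γ‖₊ : ℝ≥0∞)) ^ q ∂ν
      = ∫⁻ y, ((‖φ y‖₊ : ℝ≥0∞)) ^ q ∂ν :=
    lintegral_congr fun y => (enorm_lp_rpow hq (φ y)).symm
  have hRfin : ∫⁻ y, ((‖φ y‖₊ : ℝ≥0∞)) ^ q ∂ν < ⊤ := by
    have h1 := hφ.2
    rw [eLpNorm_eq_lintegral_rpow_enorm_toReal hp0 hp] at h1
    exact (ENNReal.rpow_lt_top_iff_of_pos (by positivity)).mp h1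
  have hmeasL : ∀ l : Λ, Measurable fun x => ((‖coords β f φ x l‖₊ : ℝ≥0∞)) ^ q :=
    fun l => ((measurable_coords hactΛ f β hβmeas hsm l).nnnorm.coe_nnreal_ennreal).pow_const q
  have hae : ∀ᵐ x ∂μ, Memℓp (coords β f φ x) p := by
    have hfin : ∀ᵐ x ∂μ, (∑' l : Λ, ((‖coords β f φ x l‖₊ : ℝ≥0∞)) ^ q) < ⊤ := by
      refine ae_lt_top (Measurable.ennreal_tsum hmeasL) ?_
      rw [hkey, hR]
      exact hRfin.ne
    filter_upwards [hfin] with x hx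
    exact memℓp_of_tsum_ne_top hq _ hx.ne
  -- a.e. strong measurability of the transfer
  have hsmL : ∀ l : Λ, Measurable fun x => coords β f φ x l :=
    measurable_coords hactΛ f β hβmeas hsm
  have hFsm : ∀ F : Finset Λ, AEStronglyMeasurable
      (fun x => ∑ l ∈ F, (lp.single p l (coords β f φ x l) : lp (fun _ : Λ => ℝ) p)) μ := by
    intro F
    refine (Finset.stronglyMeasurable_fun_sum F fun l _ => ?_).aestronglyMeasurable
    exact ((lip_single hq l).continuous).comp_stronglyMeasurable (hsmL l).stronglyMeasurable
  have hAESM : AEStronglyMeasurable (tmap p β f φ) μ := by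
    refine aestronglyMeasurable_of_tendsto_ae (atTop : Filter (Finset Λ))
      (fun F => hFsm F) ?_
    filter_upwards [hae] with x hx
    rw [tmap_of_memℓp hx]
    exact lp.hasSum_single hp (⟨coords β f φ x, hx⟩ : lp (fun _ : Λ => ℝ) p)
  have hnormae : ∀ᵐ x ∂μ, ((‖tmap p β f φ x‖₊ : ℝ≥0∞)) ^ q
      = ∑' l : Λ, ((‖coords β f φ x l‖₊ : ℝ≥0∞)) ^ q := by
    filter_upwards [hae] with x hx
    rw [tmap_of_memℓp hx]
    exact enorm_lp_rpow hq _
  have hint : ∫⁻ x, ((‖tmap p β f φ x‖₊ : ℝ≥0∞)) ^ q ∂μ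
      = ∫⁻ y, ((‖φ y‖₊ : ℝ≥0∞)) ^ q ∂ν := by
    rw [lintegral_congr_ae hnormae, hkey, hR]
  have heq : eLpNorm (tmap p β f φ) p μ = eLpNorm φ p ν := by
    rw [eLpNorm_eq_lintegral_rpow_enorm_toReal hp0 hp, eLpNorm_eq_lintegral_rpow_enorm_toReal hp0 hp]
    exact congrArg (· ^ (1 / p.toReal)) hint
  refine ⟨hae, ⟨hAESM, ?_⟩, heq⟩
  rw [heq]
  exact hφ.2

lemma tmap_congr
    (hactΛ : ∀ l : Λ, MeasurePreserving (fun y : Y => l • y) ν ν)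
    (f : X ≃ᵐ Y) (hf : MeasurePreserving f μ ν) (β : Λ → Y → Γ)
    {φ₁ φ₂ : Y → lp (fun _ : Γ => ℝ) p} (h : φ₁ =ᵐ[ν] φ₂) :
    tmap p β f φ₁ =ᵐ[μ] tmap p β f φ₂ := by
  have hl : ∀ l : Λ, ∀ᵐ x ∂μ, φ₁ (l⁻¹ • f x) = φ₂ (l⁻¹ • f x) := fun l =>
    ae_comp ((hactΛ l⁻¹).comp hf) h
  filter_upwards [ae_all_iff.mpr hl] with x hx
  have hc : coords β f φ₁ x = coords β f φ₂ x := funext fun l => by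
    rw [coords_def, coords_def, hx l]
  rw [tmap, tmap, hc]

lemma coords_add (β : Λ → Y → Γ) (f : X → Y) (φ₁ φ₂ : Y → lp (fun _ : Γ => ℝ) p) (x : X) :
    coords β f (φ₁ + φ₂) x = coords β f φ₁ x + coords β f φ₂ x := by
  funext l
  simp only [coords_def, Pi.add_apply, lp.coeFn_add]

lemma coords_smul (β : Λ → Y → Γ) (f : X → Y) (c : ℝ) (φ : Y → lp (fun _ : Γ => ℝ) p)
    (x : X) : coords β f (c • φ) x = c • coords β f φ x := by
  funext l
  simp only [coords_def, Pi.smul_apply, lp.coeFn_smul]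

lemma tmap_add_at [Fact (1 ≤ p)] {β : Λ → Y → Γ} {f : X → Y}
    {φ₁ φ₂ : Y → lp (fun _ : Γ => ℝ) p} {x : X}
    (h₁ : Memℓp (coords β f φ₁ x) p) (h₂ : Memℓp (coords β f φ₂ x) p) :
    tmap p β f (φ₁ + φ₂) x = tmap p β f φ₁ x + tmap p β f φ₂ x := by
  have hc := coords_add β f φ₁ φ₂ x
  rw [tmap_of_memℓp (by rw [hc]; exact h₁.add h₂), tmap_of_memℓp h₁, tmap_of_memℓp h₂]
  refine lp.ext ?_
  rw [lp.coeFn_add]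
  exact hc

lemma tmap_smul_at [Fact (1 ≤ p)] {β : Λ → Y → Γ} {f : X → Y} (c : ℝ)
    {φ : Y → lp (fun _ : Γ => ℝ) p} {x : X} (h : Memℓp (coords β f φ x) p) :
    tmap p β f (c • φ) x = c • tmap p β f φ x := by
  have hc := coords_smul β f c φ x
  rw [tmap_of_memℓp (by rw [hc]; exact h.const_smul c), tmap_of_memℓp h]
  refine lp.ext ?_
  rw [lp.coeFn_smul]
  exact hc

lemma hbeta_one {β : Λ → Y → Γ}
    (hcoc : ∀ l₁ l₂ : Λ, ∀ᵐ y ∂ν, β (l₁ * l₂) y = β l₁ (l₂ • y) * β l₂ y) :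
    ∀ᵐ y ∂ν, β 1 y = 1 := by
  filter_upwards [hcoc 1 1] with y hy
  rw [one_mul, one_smul] at hy
  exact (left_eq_mul.mp hy)

lemma hbeta_inv {β : Λ → Y → Γ}
    (hcoc : ∀ l₁ l₂ : Λ, ∀ᵐ y ∂ν, β (l₁ * l₂) y = β l₁ (l₂ • y) * β l₂ y) (l : Λ) :
    ∀ᵐ y ∂ν, β l⁻¹ (l • y) = (β l y)⁻¹ := by
  filter_upwards [hcoc l⁻¹ l, hbeta_one hcoc] with y h1 h2
  rw [inv_mul_cancel, h2] at h1
  exact eq_inv_of_mul_eq_one_left h1.symm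

lemma hbeta_bij
    (f : X ≃ᵐ Y) (hf : MeasurePreserving f μ ν) {β : Λ → Y → Γ}
    (hfreeΓ : ∀ᵐ x ∂μ, ∀ γ : Γ, γ • x = x → γ = 1)
    (hfreeΛ : ∀ᵐ y ∂ν, ∀ l : Λ, l • y = y → l = 1)
    (horbit : ∀ᵐ x ∂μ, f '' (MulAction.orbit Γ x) = MulAction.orbit Λ (f x))
    (hβ : ∀ l : Λ, ∀ᵐ y ∂ν, f.symm (l • y) = β l y • f.symm y) :
    ∀ᵐ y ∂ν, Function.Bijective fun l : Λ => β l y := by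
  have hsymm : MeasurePreserving f.symm ν μ := hf.symm f
  have h1 : ∀ᵐ y ∂ν, ∀ γ : Γ, γ • (f.symm y) = f.symm y → γ = 1 := ae_comp hsymm hfreeΓ
  have h2 : ∀ᵐ y ∂ν, f '' (MulAction.orbit Γ (f.symm y)) = MulAction.orbit Λ (f (f.symm y)) :=
    ae_comp hsymm horbit
  have h3 : ∀ᵐ y ∂ν, ∀ l : Λ, f.symm (l • y) = β l y • f.symm y := ae_all_iff.mpr hβ
  filter_upwards [h1, h2, h3, hfreeΛ] with y hfree hor hb hfl
  constructor
  · intro l₁ l₂ hll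
    simp only at hll
    have e1 : f.symm (l₁ • y) = f.symm (l₂ • y) := by rw [hb l₁, hb l₂, hll]
    have e2 : l₁ • y = l₂ • y := f.symm.injective e1
    have e3 : (l₂⁻¹ * l₁) • y = y := by rw [mul_smul, e2, inv_smul_smul]
    exact (inv_mul_eq_one.mp (hfl _ e3)).symm
  · intro γ
    have hx : f (γ • f.symm y) ∈ MulAction.orbit Λ y := by
      have hmem : f (γ • f.symm y) ∈ f '' (MulAction.orbit Γ (f.symm y)) :=
        ⟨_, MulAction.mem_orbit _ γ, rfl⟩
      rw [hor, f.apply_symm_apply] at hmem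
      exact hmem
    obtain ⟨l, hl⟩ := hx
    simp only at hl
    refine ⟨l, ?_⟩
    have e1 : f.symm (l • y) = γ • f.symm y := by rw [hl, f.symm_apply_apply]
    rw [hb l] at e1
    have e2 : (γ⁻¹ * β l y) • f.symm y = f.symm y := by rw [mul_smul, e1, inv_smul_smul]
    have := hfree _ e2
    simp only
    exact (inv_mul_eq_one.mp this).symm

end core

end OETransfer

set_option maxHeartbeats 2000000

/-- The map `φ ↦ φ̃`, `(φ̃(x))(λ) = (φ(λ⁻¹·f(x)))(β(λ⁻¹,f(x))⁻¹)`, is a linear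
isometric isomorphism from `Lᵖ(Y, ℓᵖ(Γ))` onto `Lᵖ(X, ℓᵖ(Λ))`, where `f : X → Y` is
the orbit-equivalence isomorphism with cocycle `β : Λ × Y → Γ`. -/
theorem oe_transfer_isometry {Γ Λ X Y : Type*} [Group Γ] [Group Λ]
    [MulAction Γ X] [MulAction Λ Y]
    [MeasurableSpace X] [MeasurableSpace Y]
    [MeasurableSpace Γ] [MeasurableSingletonClass Γ] [Countable Γ] [Countable Λ]
    (μ : Measure X) (ν : Measure Y) [IsProbabilityMeasure μ] [IsProbabilityMeasure ν]
    (hactΓ : ∀ γ : Γ, MeasurePreserving (fun x : X => γ • x) μ μ)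
    (hactΛ : ∀ l : Λ, MeasurePreserving (fun y : Y => l • y) ν ν)
    (f : X ≃ᵐ Y) (hf : MeasurePreserving f μ ν)
    (hfreeΓ : ∀ᵐ x ∂μ, ∀ γ : Γ, γ • x = x → γ = 1)
    (hfreeΛ : ∀ᵐ y ∂ν, ∀ l : Λ, l • y = y → l = 1)
    (horbit : ∀ᵐ x ∂μ, f '' (MulAction.orbit Γ x) = MulAction.orbit Λ (f x))
    (β : Λ → Y → Γ) (hβmeas : ∀ l : Λ, Measurable (β l))
    (hβ : ∀ l : Λ, ∀ᵐ y ∂ν, f.symm (l • y) = β l y • f.symm y)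
    (hcoc : ∀ l₁ l₂ : Λ, ∀ᵐ y ∂ν, β (l₁ * l₂) y = β l₁ (l₂ • y) * β l₂ y)
    (p : ℝ≥0∞) [Fact (1 ≤ p)] (hp : p ≠ ⊤) :
    ∃ T : Lp (lp (fun _ : Γ => ℝ) p) p ν ≃ₗᵢ[ℝ] Lp (lp (fun _ : Λ => ℝ) p) p μ,
      ∀ φ : Lp (lp (fun _ : Γ => ℝ) p) p ν, ∀ᵐ x ∂μ, ∀ l : Λ,
        (T φ : X → lp (fun _ : Λ => ℝ) p) x l =
          (φ : Y → lp (fun _ : Γ => ℝ) p) (l⁻¹ • f x) ((β l⁻¹ (f x))⁻¹) := by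
  classical
  open OETransfer in
  have hp1 : (1 : ℝ≥0∞) ≤ p := Fact.out
  have hp0 : p ≠ 0 := (lt_of_lt_of_le zero_lt_one hp1).ne'
  have hq : 0 < p.toReal := ENNReal.toReal_pos hp0 hp
  have hinv : ∀ l : Λ, ∀ᵐ y ∂ν, β l⁻¹ (l • y) = (β l y)⁻¹ := OETransfer.hbeta_inv hcoc
  have hbij : ∀ᵐ y ∂ν, Function.Bijective fun l : Λ => β l y :=
    OETransfer.hbeta_bij f hf hfreeΓ hfreeΛ horbit hβ
  -- strongly measurable representatives
  have rep : ∀ φ : Lp (lp (fun _ : Γ => ℝ) p) p ν, ∃ gg : Y → lp (fun _ : Γ => ℝ) p,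
      StronglyMeasurable gg ∧ (φ : Y → lp (fun _ : Γ => ℝ) p) =ᵐ[ν] gg := fun φ =>
    ⟨(Lp.aestronglyMeasurable φ).mk _, (Lp.aestronglyMeasurable φ).stronglyMeasurable_mk,
      (Lp.aestronglyMeasurable φ).ae_eq_mk⟩
  choose g hgsm hgae using rep
  have hgcoord : ∀ φ, ∀ γ : Γ, Measurable fun y => g φ y γ := fun φ γ =>
    ((OETransfer.lip_eval γ).continuous.comp_stronglyMeasurable (hgsm φ)).measurable
  have hgmem : ∀ φ, MemLp (g φ) p ν := fun φ => (Lp.memLp φ).ae_eq (hgae φ)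
  have hcrux := fun φ => OETransfer.crux hp hactΛ f hf β hβmeas hinv hbij
    (hgcoord φ) (hgmem φ)
  -- the transfer map on Lp
  set T0f : Lp (lp (fun _ : Γ => ℝ) p) p ν → Lp (lp (fun _ : Λ => ℝ) p) p μ :=
    fun φ => ((hcrux φ).2.1).toLp (tmap p β f (g φ)) with hT0fdef
  have hT0coe : ∀ φ, (T0f φ : X → lp (fun _ : Λ => ℝ) p) =ᵐ[μ] tmap p β f (g φ) :=
    fun φ => MemLp.coeFn_toLp _
  have hadd : ∀ φ₁ φ₂, T0f (φ₁ + φ₂) = T0f φ₁ + T0f φ₂ := by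
    intro φ₁ φ₂
    refine Lp.ext ?_
    have h1 : g (φ₁ + φ₂) =ᵐ[ν] g φ₁ + g φ₂ := by
      filter_upwards [(hgae (φ₁ + φ₂)).symm, Lp.coeFn_add φ₁ φ₂, hgae φ₁, hgae φ₂]
        with y a b c d
      rw [a, b]
      simp only [Pi.add_apply]
      rw [c, d]
    refine (hT0coe _).trans ?_
    refine (OETransfer.tmap_congr hactΛ f hf β h1).trans ?_
    have h2 : tmap p β f (g φ₁ + g φ₂) =ᵐ[μ] tmap p β f (g φ₁) + tmap p β f (g φ₂) := by
      filter_upwards [(hcrux φ₁).1, (hcrux φ₂).1] with x hx1 hx2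
      exact OETransfer.tmap_add_at hx1 hx2
    refine h2.trans ?_
    filter_upwards [hT0coe φ₁, hT0coe φ₂, Lp.coeFn_add (T0f φ₁) (T0f φ₂)] with x a b c
    rw [c, Pi.add_apply, Pi.add_apply, a, b]
  have hsmul : ∀ (c : ℝ) φ, T0f (c • φ) = c • T0f φ := by
    intro c φ
    refine Lp.ext ?_
    have h1 : g (c • φ) =ᵐ[ν] c • g φ := by
      filter_upwards [(hgae (c • φ)).symm, Lp.coeFn_smul c φ, hgae φ] with y a b d
      rw [a, b]
      simp only [Pi.smul_apply]
      rw [d]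
    refine (hT0coe _).trans ?_
    refine (OETransfer.tmap_congr hactΛ f hf β h1).trans ?_
    have h2 : tmap p β f (c • g φ) =ᵐ[μ] c • tmap p β f (g φ) := by
      filter_upwards [(hcrux φ).1] with x hx
      exact OETransfer.tmap_smul_at c hx
    refine h2.trans ?_
    filter_upwards [hT0coe φ, Lp.coeFn_smul c (T0f φ)] with x a c'
    rw [c', Pi.smul_apply, Pi.smul_apply, a]
  have hnrm : ∀ φ, ‖T0f φ‖ = ‖φ‖ := by
    intro φ
    rw [Lp.norm_def, Lp.norm_def]
    congr 1
    rw [eLpNorm_congr_ae (hT0coe φ), (hcrux φ).2.2, ← eLpNorm_congr_ae (hgae φ)]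
  set T₀ : Lp (lp (fun _ : Γ => ℝ) p) p ν →ₗᵢ[ℝ] Lp (lp (fun _ : Λ => ℝ) p) p μ :=
    ⟨{ toFun := T0f, map_add' := hadd,
       map_smul' := fun c φ => by simpa using hsmul c φ }, hnrm⟩ with hT₀def
  have hT₀app : ∀ φ, T₀ φ = T0f φ := fun _ => rfl
  -- the a.e. formula for T0f
  have hformula : ∀ φ, ∀ᵐ x ∂μ, ∀ l : Λ,
      (T0f φ : X → lp (fun _ : Λ => ℝ) p) x l =
        (φ : Y → lp (fun _ : Γ => ℝ) p) (l⁻¹ • f x) ((β l⁻¹ (f x))⁻¹) := by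
    intro φ
    have hcoe : ∀ l : Λ, ∀ᵐ x ∂μ,
        (φ : Y → lp (fun _ : Γ => ℝ) p) (l⁻¹ • f x) = g φ (l⁻¹ • f x) := fun l =>
      OETransfer.ae_comp ((hactΛ l⁻¹).comp hf) (hgae φ)
    filter_upwards [hT0coe φ, (hcrux φ).1, ae_all_iff.mpr hcoe] with x h1 h2 h3
    intro l
    rw [h1, OETransfer.tmap_of_memℓp h2]
    show coords β f (g φ) x l = _
    rw [OETransfer.coords_def, ← h3 l]
  -- surjectivity
  have hsurj : Function.Surjective T₀ := by
    have hclosed : IsClosed (Set.range T₀) :=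
      (T₀.isometry.isClosedEmbedding).isClosed_range
    -- Step 1: indicators of single basis vectors are in the range
    have hsingle : ∀ (l₀ : Λ) (r : ℝ) (s : Set X) (hs : MeasurableSet s) (hμs : μ s ≠ ∞),
        indicatorConstLp p hs hμs (lp.single p l₀ r) ∈ Set.range T₀ := by
      intro l₀ r s hs hμs
      set B : Set Y := (fun y => f.symm (l₀ • y)) ⁻¹' s with hBdef
      have hBmeas : MeasurableSet B := (f.symm.measurable.comp (hactΛ l₀).measurable) hs
      set φfun : Y → lp (fun _ : Γ => ℝ) p :=
        fun y => Set.indicator B (fun y' => lp.single p (β l₀ y') r) y with hφdef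
      have hφsm : AEStronglyMeasurable φfun ν := by
        refine aestronglyMeasurable_of_tendsto_ae (atTop : Filter (Finset Γ))
          (f := fun F y => ∑ γ ∈ F,
            Set.indicator (B ∩ β l₀ ⁻¹' {γ})
              (fun _ => (lp.single p γ r : lp (fun _ : Γ => ℝ) p)) y)
          (fun F => ?_) ?_
        · refine (Finset.stronglyMeasurable_fun_sum _ fun γ _ => ?_).aestronglyMeasurable
          exact stronglyMeasurable_const.indicator
            (hBmeas.inter (hβmeas l₀ (measurableSet_singleton γ)))
        · refine Filter.Eventually.of_forall fun y => ?_
          refine tendsto_atTop_of_eventually_const (i₀ := {β l₀ y}) fun F hF => ?_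
          have hmem : β l₀ y ∈ F := hF (Finset.mem_singleton_self _)
          have h0 : ∀ γ ∈ F, γ ≠ β l₀ y →
              Set.indicator (B ∩ β l₀ ⁻¹' {γ})
                (fun _ => (lp.single p γ r : lp (fun _ : Γ => ℝ) p)) y = 0 := by
            intro γ _ hγne
            refine Set.indicator_of_notMem ?_ _
            rintro ⟨-, hmem2⟩
            exact hγne (Set.mem_singleton_iff.mp hmem2).symm
          refine (Finset.sum_eq_single_of_mem _ hmem h0).trans ?_
          by_cases hyB : y ∈ B
          · have hyB2 : y ∈ B ∩ β l₀ ⁻¹' {β l₀ y} := ⟨hyB, rfl⟩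
            rw [Set.indicator_of_mem hyB2, hφdef]
            simp only
            rw [Set.indicator_of_mem hyB]
          · rw [Set.indicator_of_notMem (fun hc => hyB hc.1), hφdef]
            simp only
            rw [Set.indicator_of_notMem hyB]
      have hφbd : ∀ y, ‖φfun y‖ ≤ |r| := by
        intro y
        rw [hφdef]
        simp only
        by_cases hyB : y ∈ B
        · rw [Set.indicator_of_mem hyB]
          rw [show ‖(lp.single p (β l₀ y) r : lp (fun _ : Γ => ℝ) p)‖ = ‖r‖ from
            lp.norm_single (E := fun _ : Γ => ℝ) (zero_lt_one.trans_le Fact.out) _ r]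
          rw [Real.norm_eq_abs]
        · rw [Set.indicator_of_notMem hyB]
          simp [abs_nonneg]
      have hφmem : MemLp φfun p ν := MemLp.of_bound hφsm |r| (Filter.Eventually.of_forall hφbd)
      refine ⟨hφmem.toLp φfun, ?_⟩
      rw [hT₀app]
      refine Lp.ext ?_
      have e2 : g (hφmem.toLp φfun) =ᵐ[ν] φfun :=
        (hgae (hφmem.toLp φfun)).symm.trans (hφmem.coeFn_toLp)
      have e3 := OETransfer.tmap_congr hactΛ f hf β e2
      have hP1 : ∀ l : Λ, ∀ᵐ x ∂μ, (β l⁻¹ (f x))⁻¹ = β l (l⁻¹ • f x) := by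
        intro l
        have hthis : ∀ᵐ x ∂μ, β l⁻¹ (l • (l⁻¹ • f x)) = (β l (l⁻¹ • f x))⁻¹ :=
          OETransfer.ae_comp ((hactΛ l⁻¹).comp hf) (hinv l)
        filter_upwards [hthis] with x hx
        rw [smul_inv_smul] at hx
        rw [hx, inv_inv]
      have hP2 : ∀ l : Λ, ∀ᵐ x ∂μ, Function.Injective fun m : Λ => β m (l⁻¹ • f x) := fun l =>
        OETransfer.ae_comp ((hactΛ l⁻¹).comp hf) (hbij.mono fun y hy => hy.1)
      have hcomp : tmap p β f φfun =ᵐ[μ]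
          fun x => Set.indicator s (fun _ => (lp.single p l₀ r : lp (fun _ : Λ => ℝ) p)) x := by
        filter_upwards [ae_all_iff.mpr hP1, ae_all_iff.mpr hP2] with x h1 h2
        have hcx : coords β f φfun x =
            ((Set.indicator s (fun _ => (lp.single p l₀ r : lp (fun _ : Λ => ℝ) p)) x
              : lp (fun _ : Λ => ℝ) p) : Λ → ℝ) := by
          funext l
          rw [OETransfer.coords_def, h1 l]
          rw [hφdef]
          simp only
          by_cases hyB : (l⁻¹ • f x : Y) ∈ B
          · rw [Set.indicator_of_mem hyB]
            by_cases hls : l = l₀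
            · subst hls
              have hxx : f.symm (l • (l⁻¹ • f x)) = x := by
                rw [smul_inv_smul, f.symm_apply_apply]
              have hxs' : x ∈ s := by
                have := hyB
                rw [hBdef, Set.mem_preimage, hxx] at this
                exact this
              rw [lp.single_apply_self, Set.indicator_of_mem hxs', lp.single_apply_self]
            · have hne : β l (l⁻¹ • f x) ≠ β l₀ (l⁻¹ • f x) := fun hc => hls (h2 l hc)
              rw [lp.single_apply_ne p _ _ hne]
              by_cases hxs' : x ∈ s
              · rw [Set.indicator_of_mem hxs', lp.single_apply_ne p _ _ hls]
              · rw [Set.indicator_of_notMem hxs']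
                simp [lp.coeFn_zero]
          · rw [Set.indicator_of_notMem hyB]
            by_cases hls : l = l₀
            · subst hls
              have hxs' : x ∉ s := by
                intro hc
                apply hyB
                rw [hBdef, Set.mem_preimage, smul_inv_smul, f.symm_apply_apply]
                exact hc
              rw [Set.indicator_of_notMem hxs']
              simp [lp.coeFn_zero]
            · by_cases hxs' : x ∈ s
              · rw [Set.indicator_of_mem hxs', lp.single_apply_ne p _ _ hls]
                simp [lp.coeFn_zero]
              · rw [Set.indicator_of_notMem hxs']
                simp [lp.coeFn_zero]
        have hml : Memℓp (coords β f φfun x) p := by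
          rw [hcx]
          exact lp.memℓp _
        rw [OETransfer.tmap_of_memℓp hml]
        exact lp.ext hcx
      have e4 : (fun x => Set.indicator s
            (fun _ => (lp.single p l₀ r : lp (fun _ : Λ => ℝ) p)) x) =ᵐ[μ]
          (indicatorConstLp p hs hμs (lp.single p l₀ r) : X → lp (fun _ : Λ => ℝ) p) :=
        (indicatorConstLp_coeFn).symm
      exact (hT0coe _).trans (e3.trans (hcomp.trans e4))
    -- Step 2: all constant indicators are in the range
    have hind : ∀ (c : lp (fun _ : Λ => ℝ) p) (s : Set X) (hs : MeasurableSet s)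
        (hμs : μ s ≠ ∞), indicatorConstLp p hs hμs c ∈ Set.range T₀ := by
      intro c s hs hμs
      have hlip : LipschitzWith ((μ s).toReal ^ (1 / p.toReal)).toNNReal
          (fun c : lp (fun _ : Λ => ℝ) p => indicatorConstLp p hs hμs c) := by
        apply LipschitzWith.of_dist_le_mul
        intro a b
        rw [dist_eq_norm, dist_eq_norm, indicatorConstLp_sub,
          norm_indicatorConstLp hp0 hp, Real.coe_toNNReal _ (by positivity), mul_comm]
        exact le_rfl
      have hsum := lp.hasSum_single hp c
      have htend : Filter.Tendsto
          (fun F : Finset Λ => indicatorConstLp p hs hμs (∑ l ∈ F, lp.single p l (c l)))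
          atTop (𝓝 (indicatorConstLp p hs hμs c)) :=
        (hlip.continuous.tendsto c).comp hsum
      refine hclosed.mem_of_tendsto htend (Filter.Eventually.of_forall fun F => ?_)
      induction F using Finset.induction_on with
      | empty =>
        simp only [Finset.sum_empty]
        have h0 : indicatorConstLp p hs hμs (0 : lp (fun _ : Λ => ℝ) p) = 0 := by
          refine Lp.ext ?_
          refine (indicatorConstLp_coeFn).trans ?_
          rw [show (Set.indicator s fun _ => (0 : lp (fun _ : Λ => ℝ) p)) = fun _ => 0 from
            funext fun x => Set.indicator_apply_eq_self.mpr fun _ => rfl]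
          exact (Lp.coeFn_zero _ _ _).symm
        rw [h0]
        exact ⟨0, map_zero T₀⟩
      | insert _ _ hnm ih =>
        rw [Finset.sum_insert hnm, ← indicatorConstLp_add]
        obtain ⟨ψ₁, hψ₁⟩ := hsingle _ _ s hs hμs
        obtain ⟨ψ₂, hψ₂⟩ := ih
        exact ⟨ψ₁ + ψ₂, by rw [map_add, hψ₁, hψ₂]⟩
    -- Step 3: conclude by Lp.induction
    intro ψ
    refine Lp.induction hp (fun ψ => ψ ∈ Set.range T₀) ?_ ?_ ?_ ψ
    · intro c s' hs' hμs'
      rw [Lp.simpleFunc.coe_indicatorConst]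
      exact hind c s' hs' hμs'.ne
    · intro f₁ f₂ hf₁ hf₂ hdisj h₁ h₂
      obtain ⟨χ₁, hχ₁⟩ := h₁
      obtain ⟨χ₂, hχ₂⟩ := h₂
      exact ⟨χ₁ + χ₂, by rw [map_add, hχ₁, hχ₂]⟩
    · exact hclosed
  refine ⟨LinearIsometryEquiv.ofSurjective T₀ hsurj, fun φ => ?_⟩
  have hco : (LinearIsometryEquiv.ofSurjective T₀ hsurj) φ = T₀ φ :=
    congrFun (LinearIsometryEquiv.coe_ofSurjective T₀ hsurj) φ
  rw [hco, hT₀app]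
  exact hformula φ
end

section
/- With the above identification, the map φ ↦ φ̃ intertwines the induced representation σ of Λ on Lᵖ(Y, ℓᵖ(Γ)) with the representation σ̃ on Lᵖ(X, ℓᵖ(Λ)) given by (σ̃(λ)ψ)(x) = ρ_Λ(λ)(ψ(x)), i.e., (σ(λ)φ)~ = σ̃(λ) φ̃ for all λ ∈ Λ. In particular the computation reduces to the cocycle identity β(λ⁻¹λ̲⁻¹, f(x)) = β(λ⁻¹, λ̲⁻¹·f(x)) β(λ̲⁻¹, f(x)). -/
section

variable {X Y Γ Λ : Type*} [Group Γ] [Group Λ] [MulAction Λ Y]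

/-- The transfer map `φ ↦ φ̃` : `(φ̃(x))(λ̲) = (φ(λ̲⁻¹·f(x)))(β(λ̲⁻¹, f(x))⁻¹)`. -/
def tildeMap (f : X → Y) (β : Λ → Y → Γ) (φ : Y → Γ → ℝ) : X → Λ → ℝ :=
  fun x lb => φ (lb⁻¹ • f x) ((β lb⁻¹ (f x))⁻¹)

/-- The induced representation `σ` of `Λ` : `(σ(λ)φ)(y) = ρ_Γ(β(λ⁻¹,y)⁻¹) φ(λ⁻¹·y)`,
where `ρ_Γ` is the right regular representation, `(ρ_Γ(g)ξ)(γ) = ξ(γg)`. -/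
def sigmaRep (β : Λ → Y → Γ) (l : Λ) (φ : Y → Γ → ℝ) : Y → Γ → ℝ :=
  fun y γ => φ (l⁻¹ • y) (γ * (β l⁻¹ y)⁻¹)

/-- The representation `σ̃` of `Λ` : `(σ̃(λ)ψ)(x) = ρ_Λ(λ)(ψ(x))`, with `ρ_Λ` the
right regular representation of `Λ`. -/
def sigmaTildeRep (l : Λ) (ψ : X → Λ → ℝ) : X → Λ → ℝ :=
  fun x lb => ψ x (lb * l)

/-- The map `φ ↦ φ̃` intertwines the induced representation `σ` with `σ̃`:
`(σ(λ)φ)~ = σ̃(λ) φ̃`; the computation reduces to the cocycle identity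
`β(λ⁻¹λ̲⁻¹, f(x)) = β(λ⁻¹, λ̲⁻¹·f(x)) β(λ̲⁻¹, f(x))`. -/
theorem tilde_intertwines (f : X → Y) (β : Λ → Y → Γ)
    (hcoc : ∀ (l₁ l₂ : Λ) (y : Y), β (l₁ * l₂) y = β l₁ (l₂ • y) * β l₂ y) :
    ∀ (l : Λ) (φ : Y → Γ → ℝ),
      tildeMap f β (sigmaRep β l φ) = sigmaTildeRep l (tildeMap f β φ) := by
  intro l φ
  funext x lb
  simp only [tildeMap, sigmaRep, sigmaTildeRep, mul_inv_rev, smul_smul]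
  rw [hcoc, mul_inv_rev]

end
end
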